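/- Let X be a real Banach space, x₀ ∈ X and r > 0. Let D ⊂ X be a subset with B(x₀, r) ⊂ D, and let g : D → X be an isometry satisfying g(x) = x for every x ∈ B(x₀, r). Then g(x) = x holds for every x ∈ D ∩ B(x₀, 2r). -/

import Mathlib

/-- Lemma 1: an isometry on a set `D` containing the ball `B(x₀, r)` which fixes
that ball pointwise also fixes `D ∩ B(x₀, 2r)` pointwise. -/
theorem isometry_fix_ball_extends_to_double_ball
    {X : Type*} [NormedAddCommGroup X] [NormedSpace ℝ X] [CompleteSpace X]
    (x₀ : X) (r : ℝ) (hr : 0 < r) (D : Set X) (hD : Metric.closedBall x₀ r ⊆ D)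
    (g : X → X)
    (hg : ∀ x₁ ∈ D, ∀ x₂ ∈ D, ‖g x₁ - g x₂‖ = ‖x₁ - x₂‖)
    (hfix : ∀ x ∈ Metric.closedBall x₀ r, g x = x) :
    ∀ x ∈ D ∩ Metric.closedBall x₀ (2 * r), g x = x := by
  rintro x ⟨hxD, hx2⟩
  by_cases hxr : x ∈ Metric.closedBall x₀ r
  · exact hfix x hxr
  set c : X := x - x₀ with hc
  set u : X := g x - x with hu
  have hdr : r < ‖c‖ := by
    have : ¬ dist x x₀ ≤ r := hxr
    rw [dist_eq_norm] at this
    linarith [not_le.mp this]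
  have hd2 : ‖c‖ ≤ 2 * r := by
    have : dist x x₀ ≤ 2 * r := hx2
    rwa [dist_eq_norm] at this
  have hd0 : (0:ℝ) < ‖c‖ := lt_trans hr hdr
  -- key equidistance property
  have key : ∀ p : X, ‖p‖ ≤ r → ‖c + u - p‖ = ‖c - p‖ := by
    intro p hp
    have hmem : x₀ + p ∈ Metric.closedBall x₀ r := by
      simp only [Metric.mem_closedBall, dist_eq_norm, add_sub_cancel_left]
      exact hp
    have h1 : g (x₀ + p) = x₀ + p := hfix _ hmem
    have h2 := hg x hxD (x₀ + p) (hD hmem)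
    rw [h1] at h2
    have e1 : c + u - p = g x - (x₀ + p) := by rw [hc, hu]; abel
    have e2 : c - p = x - (x₀ + p) := by rw [hc]; abel
    rw [e1, e2]; exact h2
  set β : ℝ := 1 - r / ‖c‖ with hβ
  have hβ0 : 0 ≤ β := by
    rw [hβ]
    have : r / ‖c‖ ≤ 1 := by
      rw [div_le_one hd0]; exact hdr.le
    linarith
  have hsβ0 : 0 ≤ 1 - β := by
    rw [hβ]
    have : 0 ≤ r / ‖c‖ := div_nonneg hr.le hd0.le
    linarith
  have hbc : ‖β • c‖ ≤ r := by
    rw [norm_smul, Real.norm_eq_abs, abs_of_nonneg hβ0, hβ]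
    have : (1 - r / ‖c‖) * ‖c‖ = ‖c‖ - r := by
      field_simp
    rw [this]; linarith
  have hsc : ‖(1 - β) • c‖ ≤ r := by
    rw [norm_smul, Real.norm_eq_abs, abs_of_nonneg hsβ0, hβ]
    have : (1 - (1 - r / ‖c‖)) * ‖c‖ = r := by
      field_simp
      ring
    rw [this]
  -- translation identities
  have H1 : ∀ τ : ℝ, ‖β • c + τ • u‖ ≤ r →
      ‖(1 - β) • c + (1 - τ) • u‖ = ‖(1 - β) • c + (-τ) • u‖ := by
    intro τ h
    have hk := key (β • c + τ • u) h
    have e1 : c + u - (β • c + τ • u) = (1 - β) • c + (1 - τ) • u := by module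
    have e2 : c - (β • c + τ • u) = (1 - β) • c + (-τ) • u := by module
    rw [e1, e2] at hk
    exact hk
  have H2 : ∀ τ : ℝ, ‖(1 - β) • c + τ • u‖ ≤ r →
      ‖β • c + (1 - τ) • u‖ = ‖β • c + (-τ) • u‖ := by
    intro τ h
    have hk := key ((1 - β) • c + τ • u) h
    have e1 : c + u - ((1 - β) • c + τ • u) = β • c + (1 - τ) • u := by module
    have e2 : c - ((1 - β) • c + τ • u) = β • c + (-τ) • u := by module
    rw [e1, e2] at hk
    exact hk
  -- main induction
  have main : ∀ n : ℕ, ‖β • c + (n : ℝ) • u‖ ≤ r ∧ ‖β • c + (-(n : ℝ)) • u‖ ≤ r ∧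
      ‖(1 - β) • c + (n : ℝ) • u‖ ≤ r ∧ ‖(1 - β) • c + (-(n : ℝ)) • u‖ ≤ r := by
    intro n
    induction n with
    | zero =>
      simp only [Nat.cast_zero, neg_zero, zero_smul, add_zero]
      exact ⟨hbc, hbc, hsc, hsc⟩
    | succ n ih =>
      obtain ⟨h1, h2, h3, h4⟩ := ih
      have hχp : ‖(1 - β) • c + ((n : ℝ) + 1) • u‖ ≤ r := by
        have := H1 (-(n : ℝ)) h2
        rw [show (1 - -(n:ℝ)) = (n:ℝ) + 1 by ring, show (-(-(n:ℝ))) = (n:ℝ) by ring] at this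
        rw [this]; exact h3
      have hψp : ‖β • c + ((n : ℝ) + 1) • u‖ ≤ r := by
        have := H2 (-(n : ℝ)) h4
        rw [show (1 - -(n:ℝ)) = (n:ℝ) + 1 by ring, show (-(-(n:ℝ))) = (n:ℝ) by ring] at this
        rw [this]; exact h1
      have hψm : ‖β • c + (-((n : ℝ) + 1)) • u‖ ≤ r := by
        have := H2 ((n : ℝ) + 1) hχp
        rw [show (1 - ((n:ℝ) + 1)) = -(n:ℝ) by ring] at this
        rw [← this]; exact h2
      have hχm : ‖(1 - β) • c + (-((n : ℝ) + 1)) • u‖ ≤ r := by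
        have := H1 ((n : ℝ) + 1) hψp
        rw [show (1 - ((n:ℝ) + 1)) = -(n:ℝ) by ring] at this
        rw [← this]; exact h4
      push_cast
      exact ⟨hψp, hψm, hχp, hχm⟩
  -- conclude u = 0
  have hu0 : u = 0 := by
    by_contra h
    have hun : 0 < ‖u‖ := norm_pos_iff.mpr h
    obtain ⟨n, hn⟩ := exists_nat_gt ((r + ‖β • c‖) / ‖u‖)
    have hb := (main n).1
    have : ‖(n : ℝ) • u‖ ≤ ‖β • c + (n : ℝ) • u‖ + ‖β • c‖ := by
      have := norm_sub_le (β • c + (n : ℝ) • u) (β • c)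
      simpa using this
    have hle : (n : ℝ) * ‖u‖ ≤ r + ‖β • c‖ := by
      rw [norm_smul, Real.norm_natCast] at this
      linarith
    have : (r + ‖β • c‖) / ‖u‖ < (n : ℝ) := hn
    have := (div_lt_iff₀ hun).mp this
    linarith
  exact sub_eq_zero.mp hu0
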